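/- Let X be a compact Hausdorff topological space and let ρ : X × X → ℝ be continuous with ρ(x,y) ≥ 0 for all x,y, ρ(x,x) = 0 for all x, and ρ(x,y) = ρ(y,x) for all x,y. Then the following are equivalent: (a) for all x, y ∈ X, ρ(x,y) = 0 implies x = y; (b) for every continuous function ν : X × X → ℝ with ν(x,y) ≥ 0 for all x,y, ν(x,y) = ν(y,x) for all x,y, and ν(x,x) = 1 for all x, the function ρ + ν vanishes nowhere on X × X (equivalently, ρ + ν is invertible in the algebra C(X × X)). -/
import Mathlib

/-- For a compact Hausdorff space `X` and a continuous, nonnegative,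
symmetric `ρ : X × X → ℝ` vanishing on the diagonal, the separation condition
(`ρ(x,y) = 0 → x = y`) is equivalent to: for every continuous nonnegative symmetric
`ν : X × X → ℝ` with `ν(x,x) = 1` for all `x`, the function `ρ + ν` vanishes nowhere
(equivalently, `ρ + ν` is invertible in `C(X × X)`). -/
theorem stmt1 {X : Type*} [TopologicalSpace X] [CompactSpace X] [T2Space X]
    (ρ : X × X → ℝ) (hρ_cont : Continuous ρ)
    (hρ_nonneg : ∀ x y : X, 0 ≤ ρ (x, y))
    (hρ_diag : ∀ x : X, ρ (x, x) = 0)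
    (hρ_symm : ∀ x y : X, ρ (x, y) = ρ (y, x)) :
    (∀ x y : X, ρ (x, y) = 0 → x = y) ↔
      (∀ ν : X × X → ℝ, Continuous ν → (∀ x y : X, 0 ≤ ν (x, y)) →
        (∀ x y : X, ν (x, y) = ν (y, x)) → (∀ x : X, ν (x, x) = 1) →
        ∀ p : X × X, ρ p + ν p ≠ 0) := by
  constructor
  · intro hsep ν hc hnn hsym hdiag p hzero
    obtain ⟨x, y⟩ := p
    have hρ0 : ρ (x, y) = 0 := le_antisymm (by linarith [hnn x y]) (hρ_nonneg x y)
    have hν0 : ν (x, y) = 0 := by linarith [hρ_nonneg x y]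
    have := hsep x y hρ0
    subst this
    rw [hdiag x] at hν0
    norm_num at hν0
  · intro h x y hxy
    by_contra hne
    obtain ⟨f, hfx, hfy, hf01⟩ := exists_continuous_zero_one_of_isClosed
      (isClosed_singleton (x := x)) (isClosed_singleton (x := y))
      (Set.disjoint_singleton.mpr hne)
    set ν : X × X → ℝ := fun p => 1 - (f p.1 - f p.2) ^ 2 with hν
    have hbound : ∀ a b : X, (f a - f b) ^ 2 ≤ 1 := by
      intro a b
      have ha := hf01 a; have hb := hf01 b
      simp only [Set.mem_Icc] at ha hb
      nlinarith [ha.1, ha.2, hb.1, hb.2]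
    have := h ν (by continuity)
      (fun a b => by simp only [hν]; linarith [hbound a b])
      (fun a b => by simp [hν]; ring)
      (fun a => by simp [hν])
      (x, y)
    apply this
    have hfx0 : f x = 0 := hfx rfl
    have hfy1 : f y = 1 := hfy rfl
    simp [hν, hxy, hfx0, hfy1]
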